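/- The product ⋆ on 𝓕 is associative: for all subspaces A, B, C, D of E and all f₁ ∈ 𝓕_{AB}, f₂ ∈ 𝓕_{BC}, f₃ ∈ 𝓕_{CD}, one has (f₁ ⋆ f₂) ⋆ f₃ = f₁ ⋆ (f₂ ⋆ f₃). -/

import Mathlib

open scoped Classical

set_option linter.unusedSectionVars false

noncomputable section

namespace Lusztig

variable (E X : Type) [AddCommGroup E] [Module (ZMod 2) E] [Fintype E]
  [Fintype X] [AddAction E X]

/-- The stabilizer of `x` in `E`, as a subset of `E`. -/
def stabSet (x : X) : Set E := {e : E | e +ᵥ x = x}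

/-- `X_A`: the set of points of `X` whose stabilizer in `E` equals `A`. -/
def XA (A : Submodule (ZMod 2) E) : Set X := {x : X | stabSet E X x = (A : Set E)}

/-- `X²_{AB} = X_A × X_B`. -/
def X2 (A B : Submodule (ZMod 2) E) : Set (X × X) := (XA E X A) ×ˢ (XA E X B)

/-- The `E`-orbit of `x` in `X`. -/
def orb (x : X) : Set X := {y : X | ∃ e : E, y = e +ᵥ x}

/-- The `E`-orbit of `(x,y)` for the diagonal action of `E` on `X × X`. -/
def orb2 (x y : X) : Set (X × X) := {q : X × X | ∃ e : E, q = (e +ᵥ x, e +ᵥ y)}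

/-- `O` is an `E`-orbit (for the diagonal action) contained in `X²_{AB}`. -/
def IsOrb2 (A B : Submodule (ZMod 2) E) (O : Set (X × X)) : Prop :=
  ∃ x y : X, x ∈ XA E X A ∧ y ∈ XA E X B ∧ O = orb2 E X x y

/-- The `E × B`-orbit of `(x,y)` for the action `(e,b)·(x,y) = (e+b+x, e+y)`. -/
def orbEB (B : Submodule (ZMod 2) E) (x y : X) : Set (X × X) :=
  {q : X × X | ∃ e b : E, b ∈ B ∧ q = ((e + b) +ᵥ x, e +ᵥ y)}

/-- `M` is an `E × B`-orbit contained in `X²_{AC}` for the action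
`(e,b)·(x,y) = (e+b+x, e+y)`. -/
def IsOrbEB (A B C : Submodule (ZMod 2) E) (M : Set (X × X)) : Prop :=
  ∃ x y : X, x ∈ XA E X A ∧ y ∈ XA E X C ∧ M = orbEB E X B x y

/-- Image under the first projection. -/
def p1 (S : Set (X × X)) : Set X := Prod.fst '' S

/-- Image under the second projection. -/
def p2 (S : Set (X × X)) : Set X := Prod.snd '' S

/-- `U_{ABC} = {(a,b,c) ∈ A × B × C : a + b + c = 0}`. -/
def UABC (A B C : Submodule (ZMod 2) E) : Set (E × E × E) :=
  {t : E × E × E | t.1 ∈ A ∧ t.2.1 ∈ B ∧ t.2.2 ∈ C ∧ t.1 + t.2.1 + t.2.2 = 0}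

/-- `X̄_C`: the set of `E`-orbits contained in `X_C`. -/
def barX (C : Submodule (ZMod 2) E) : Set (Set X) :=
  {s : Set X | ∃ x ∈ XA E X C, s = orb E X x}

/-- The dual (space of linear forms `P → ℤ/2`) of a subspace `P` of `E`. -/
abbrev Dl (P : Submodule (ZMod 2) E) : Type := ↥P →ₗ[ZMod 2] ZMod 2

/-- Restriction of a linear form along an inclusion of subspaces. -/
def res {P Q : Submodule (ZMod 2) E} (h : P ≤ Q) (φ : Dl E Q) : Dl E P :=
  φ.comp (Submodule.inclusion h)

theorem leAB (A B C : Submodule (ZMod 2) E) : A ⊓ B ⊓ C ≤ A ⊓ B := inf_le_left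
theorem leBC (A B C : Submodule (ZMod 2) E) : A ⊓ B ⊓ C ≤ B ⊓ C :=
  le_inf (inf_le_left.trans inf_le_right) inf_le_right
theorem leAC (A B C : Submodule (ZMod 2) E) : A ⊓ B ⊓ C ≤ A ⊓ C :=
  le_inf (inf_le_left.trans inf_le_left) inf_le_right
theorem leBA (A B : Submodule (ZMod 2) E) : A ⊓ B ≤ B ⊓ A := le_inf inf_le_right inf_le_left

/-- The convolution product `𝓕_{AB} × 𝓕_{BC} → 𝓕_{AC}`. -/
def conv (A B C : Submodule (ZMod 2) E)
    (f₁ : (X × X) × Dl E (A ⊓ B) → ℂ) (f₂ : (X × X) × Dl E (B ⊓ C) → ℂ) :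
    (X × X) × Dl E (A ⊓ C) → ℂ :=
  fun p =>
    (∑ᶠ (y : X) (_ : y ∈ XA E X B) (ε₁ : Dl E (A ⊓ B)) (ε₂ : Dl E (B ⊓ C))
        (_ : res E (leAB E A B C) ε₁ + res E (leBC E A B C) ε₂
              + res E (leAC E A B C) p.2 = 0),
        f₁ ((p.1.1, y), ε₁) * f₂ ((y, p.1.2), ε₂)) *
      (Nat.card ↥(A ⊓ B ⊓ C) : ℂ) / (Nat.card ↥(A ⊓ C) : ℂ)

/-- The defining conditions for membership in `𝓕_{AB}`: supported on `X²_{AB}` and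
invariant under the diagonal `E`-action. -/
def MemF (A B : Submodule (ZMod 2) E) (f : (X × X) × Dl E (A ⊓ B) → ℂ) : Prop :=
  (∀ p : (X × X) × Dl E (A ⊓ B), p.1 ∉ X2 E X A B → f p = 0) ∧
  (∀ (e : E) (x y : X) (ε : Dl E (A ⊓ B)), f ((e +ᵥ x, e +ᵥ y), ε) = f ((x, y), ε))

/-- `𝓕_{AB}` as a subspace of the space of all functions. -/
def FAB (A B : Submodule (ZMod 2) E) : Submodule ℂ ((X × X) × Dl E (A ⊓ B) → ℂ) where
  carrier := {f | MemF E X A B f}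
  add_mem' := by
    intro a b ha hb
    exact ⟨fun p hp => by simp [ha.1 p hp, hb.1 p hp],
      fun e x y ε => by simp [Pi.add_apply, ha.2 e x y ε, hb.2 e x y ε]⟩
  zero_mem' := ⟨fun p hp => rfl, fun e x y ε => rfl⟩
  smul_mem' := by
    intro c a ha
    exact ⟨fun p hp => by simp [Pi.smul_apply, ha.1 p hp],
      fun e x y ε => by simp [Pi.smul_apply, ha.2 e x y ε]⟩

/-- `[Ξ]^ε`. -/
def br (A B : Submodule (ZMod 2) E) (Ξ : Set (X × X)) (ε : Dl E (A ⊓ B)) :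
    (X × X) × Dl E (A ⊓ B) → ℂ :=
  fun p => if p.1 ∈ Ξ ∧ p.2 = ε then 1 else 0

/-- The ambient space of `𝓕 = ⊕_{A,B} 𝓕_{AB}` (all summands at once). -/
abbrev FF : Type := ∀ A B : Submodule (ZMod 2) E, (X × X) × Dl E (A ⊓ B) → ℂ

/-- The embedding of the `(A,B)` summand into `𝓕`. -/
def emb (A B : Submodule (ZMod 2) E) (f : (X × X) × Dl E (A ⊓ B) → ℂ) : FF E X :=
  fun A' B' p =>
    if h : A = A' ∧ B = B' then f (p.1, cast (by rw [h.1, h.2]) p.2) else 0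

/-- `𝓕` as a subspace of `FF`: componentwise supported on `X²_{AB}` and `E`-invariant. -/
def FFsub : Submodule ℂ (FF E X) where
  carrier := {g | ∀ A B, MemF E X A B (g A B)}
  add_mem' := by
    intro a b ha hb A B
    exact ⟨fun p hp => by simp [(ha A B).1 p hp, (hb A B).1 p hp],
      fun e x y ε => by simp [(ha A B).2 e x y ε, (hb A B).2 e x y ε]⟩
  zero_mem' := fun A B => ⟨fun p hp => rfl, fun e x y ε => rfl⟩
  smul_mem' := by
    intro c a ha A B
    exact ⟨fun p hp => by simp [(ha A B).1 p hp],
      fun e x y ε => by simp [(ha A B).2 e x y ε]⟩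

/-- The product on `𝓕` (zero between summands `𝓕_{AB}`, `𝓕_{B'C}` with `B ≠ B'`). -/
def mulFF (g h : FF E X) : FF E X :=
  fun A C => ∑ᶠ B : Submodule (ZMod 2) E, conv E X A B C (g A B) (h B C)

/-- The diagonal `Δ_A ⊆ X²_{AA}`. -/
def diagSet (A : Submodule (ZMod 2) E) : Set (X × X) :=
  {q : X × X | q.1 ∈ XA E X A ∧ q.2 = q.1}

/-- The element `∑_A [Δ_A]^0` of `𝓕`. -/
def unitFF : FF E X :=
  ∑ᶠ A : Submodule (ZMod 2) E, emb E X A A (br E X A A (diagSet E X A) 0)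

/-- The map `f ↦ f^#` on `𝓕`. -/
def shFF (g : FF E X) : FF E X :=
  fun A B p => g B A ((p.1.2, p.1.1), res E (leBA E B A) p.2)

/-- `𝒪 • 𝒪'`. -/
def bullet (O O' : Set (X × X)) : Set (X × X) :=
  {q : X × X | ∃ y : X, (q.1, y) ∈ O ∧ (y, q.2) ∈ O'}

/-- `∑_{ε ∈ α̃} [𝓜]^ε ∈ 𝓕_{AC}`, where `α̃` is the fibre of
`(A∩C)* → (A∩B∩C)*` over `α`. -/
def bSum (A B C : Submodule (ZMod 2) E) (M : Set (X × X)) (α : Dl E (A ⊓ B ⊓ C)) :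
    (X × X) × Dl E (A ⊓ C) → ℂ :=
  ∑ᶠ (ε : Dl E (A ⊓ C)) (_ : res E (leAC E A B C) ε = α), br E X A C M ε

/-- The set `𝓑_{oBC} ⊆ 𝓕` (embedded in `FF`). -/
def BoBC (A B C : Submodule (ZMod 2) E) (o : Set X) : Set (FF E X) :=
  {g | ∃ (M : Set (X × X)) (α : Dl E (A ⊓ B ⊓ C)),
      IsOrbEB E X A B C M ∧ p1 X M = o ∧ g = emb E X A C (bSum E X A B C M α)}

/-- The set `𝓑_{oB} = ⊔_C 𝓑_{oBC}`. -/
def BoB (A B : Submodule (ZMod 2) E) (o : Set X) : Set (FF E X) :=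
  ⋃ C : Submodule (ZMod 2) E, BoBC E X A B C o

/-- `[[oB]]`, the `ℂ`-span of `𝓑_{oB}`. -/
def ooB (A B : Submodule (ZMod 2) E) (o : Set X) : Submodule ℂ (FF E X) :=
  Submodule.span ℂ (BoB E X A B o)

/-! ### Auxiliary infrastructure for the proof of associativity -/

section AssocInfra

instance : FiniteDimensional (ZMod 2) E := Module.Finite.of_finite

instance (P : Submodule (ZMod 2) E) : Finite (Dl E P) :=
  Finite.of_injective (fun f => (f : ↥P → ZMod 2)) DFunLike.coe_injective

noncomputable instance (P : Submodule (ZMod 2) E) : Fintype (Dl E P) := Fintype.ofFinite _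

lemma card_eq_pow (M : Type) [AddCommGroup M] [Module (ZMod 2) M] [Finite M] :
    Nat.card M = 2 ^ Module.finrank (ZMod 2) M := by
  have : Fintype M := Fintype.ofFinite M
  rw [Nat.card_eq_fintype_card, Module.card_eq_pow_finrank (K := ZMod 2) (V := M), ZMod.card 2]

lemma dl_card (P : Submodule (ZMod 2) E) : Nat.card (Dl E P) = Nat.card ↥P := by
  rw [card_eq_pow, card_eq_pow, Subspace.dual_finrank_eq]

/-- `res` as a linear map. -/
def resL {P Q : Submodule (ZMod 2) E} (h : P ≤ Q) : Dl E Q →ₗ[ZMod 2] Dl E P :=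
  (Submodule.inclusion h).dualMap

lemma resL_apply {P Q : Submodule (ZMod 2) E} (h : P ≤ Q) (φ : Dl E Q) :
    resL E h φ = res E h φ := rfl

lemma resL_surj {P Q : Submodule (ZMod 2) E} (h : P ≤ Q) :
    Function.Surjective (resL E h) :=
  LinearMap.dualMap_surjective_of_injective (Submodule.inclusion_injective h)

lemma res_res {P Q R : Submodule (ZMod 2) E} (h₁ : P ≤ Q) (h₂ : Q ≤ R) (φ : Dl E R) :
    res E h₁ (res E h₂ φ) = res E (h₁.trans h₂) φ := rfl

lemma res_apply {P Q : Submodule (ZMod 2) E} (h : P ≤ Q) (φ : Dl E Q) (v : ↥P) :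
    res E h φ v = φ ⟨v.1, h v.2⟩ := rfl

lemma card_fiber {M N : Type} [AddCommGroup M] [AddCommGroup N] [Module (ZMod 2) M]
    [Module (ZMod 2) N] (f : M →ₗ[ZMod 2] N) (n : N) (m₀ : M) (h : f m₀ = n) :
    Nat.card {m : M // f m = n} = Nat.card ↥(LinearMap.ker f) := by
  apply Nat.card_congr
  refine ⟨fun m => ⟨m.1 - m₀, by simp [LinearMap.mem_ker, m.2, h]⟩,
    fun k => ⟨k.1 + m₀, by have := k.2; simp [LinearMap.mem_ker] at this; simp [this, h]⟩,
    fun m => by simp, fun k => by simp⟩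

lemma card_ker_mul {M N : Type} [AddCommGroup M] [AddCommGroup N] [Module (ZMod 2) M]
    [Module (ZMod 2) N] [Finite M] [Finite N] (f : M →ₗ[ZMod 2] N)
    (hf : Function.Surjective f) :
    Nat.card ↥(LinearMap.ker f) * Nat.card N = Nat.card M := by
  rw [card_eq_pow, card_eq_pow, card_eq_pow, ← pow_add]
  congr 1
  have h2 := LinearMap.finrank_range_add_finrank_ker f
  rw [LinearMap.range_eq_top.mpr hf, finrank_top] at h2
  omega

lemma card_sup_mul_card_inf (P Q : Submodule (ZMod 2) E) :
    Nat.card ↥(P ⊔ Q) * Nat.card ↥(P ⊓ Q) = Nat.card ↥P * Nat.card ↥Q := by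
  rw [card_eq_pow, card_eq_pow, card_eq_pow, card_eq_pow, ← pow_add, ← pow_add,
    Submodule.finrank_sup_add_finrank_inf_eq]

/-- The key counting lemma: the number of linear forms on `V` with prescribed restrictions
to `P` and to `Q`. -/
lemma count {P Q V : Submodule (ZMod 2) E} (hP : P ≤ V) (hQ : Q ≤ V)
    (φ : Dl E P) (ψ : Dl E Q) :
    Nat.card {η : Dl E V // res E hP η = φ ∧ res E hQ η = ψ} * Nat.card ↥(P ⊔ Q)
      = if res E (inf_le_left : P ⊓ Q ≤ P) φ = res E (inf_le_right : P ⊓ Q ≤ Q) ψ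
        then Nat.card ↥V else 0 := by
  set Θ : Dl E V →ₗ[ZMod 2] Dl E P × Dl E Q := (resL E hP).prod (resL E hQ) with hΘ
  set ρ : Dl E V →ₗ[ZMod 2] Dl E (P ⊔ Q) := resL E (sup_le hP hQ) with hρ
  set μ : Dl E P × Dl E Q →ₗ[ZMod 2] Dl E (P ⊓ Q) :=
    (resL E inf_le_left).comp (LinearMap.fst _ _ _)
      - (resL E inf_le_right).comp (LinearMap.snd _ _ _) with hμ
  have hμ_apply : ∀ t : Dl E P × Dl E Q,
      μ t = res E (inf_le_left : P ⊓ Q ≤ P) t.1 - res E (inf_le_right : P ⊓ Q ≤ Q) t.2 :=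
    fun t => rfl
  have hΘ_apply : ∀ η, Θ η = (res E hP η, res E hQ η) := fun η => rfl
  have hker : LinearMap.ker Θ = LinearMap.ker ρ := by
    ext η
    simp only [LinearMap.mem_ker, hΘ_apply, Prod.mk_eq_zero]
    constructor
    · rintro ⟨h1, h2⟩
      ext v
      obtain ⟨p, hp, q, hq, hpq⟩ := Submodule.mem_sup.mp v.2
      have e1 : (⟨(v : E), sup_le hP hQ v.2⟩ : ↥V) = (⟨p, hP hp⟩ : ↥V) + ⟨q, hQ hq⟩ := by
        apply Subtype.ext; simp [← hpq]
      have e2 : (ρ η) v = η ⟨(v : E), sup_le hP hQ v.2⟩ := rfl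
      rw [e2, e1, map_add]
      have d1 := DFunLike.congr_fun h1 ⟨p, hp⟩
      have d2 := DFunLike.congr_fun h2 ⟨q, hq⟩
      rw [res_apply] at d1 d2
      simp only [d1, d2, LinearMap.zero_apply, add_zero]
    · intro hz
      constructor <;> ext u
      · exact DFunLike.congr_fun hz ⟨(u : E), le_sup_left (α := Submodule (ZMod 2) E) u.2⟩
      · exact DFunLike.congr_fun hz ⟨(u : E), le_sup_right (α := Submodule (ZMod 2) E) u.2⟩
  have hρs : Function.Surjective ρ := resL_surj E _
  have hμs : Function.Surjective μ := by
    intro γ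
    obtain ⟨φ', hφ'⟩ := resL_surj E (inf_le_left : P ⊓ Q ≤ P) γ
    refine ⟨(φ', 0), ?_⟩
    rw [hμ_apply]
    simp only [← resL_apply, hφ']
    simp [res]
  have hle : LinearMap.range Θ ≤ LinearMap.ker μ := by
    rintro _ ⟨η, rfl⟩
    rw [LinearMap.mem_ker, hμ_apply, hΘ_apply]
    simp only [res_res]
    exact sub_eq_zero_of_eq rfl
  have hdim : Module.finrank (ZMod 2) ↥(LinearMap.range Θ)
      = Module.finrank (ZMod 2) ↥(LinearMap.ker μ) := by
    have rn1 := LinearMap.finrank_range_add_finrank_ker Θ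
    have rn2 := LinearMap.finrank_range_add_finrank_ker ρ
    have rn3 := LinearMap.finrank_range_add_finrank_ker μ
    rw [LinearMap.range_eq_top.mpr hρs, finrank_top] at rn2
    rw [LinearMap.range_eq_top.mpr hμs, finrank_top] at rn3
    rw [hker] at rn1
    rw [Module.finrank_prod] at rn3
    have hd1 : Module.finrank (ZMod 2) (Dl E P) = Module.finrank (ZMod 2) ↥P :=
      Subspace.dual_finrank_eq
    have hd2 : Module.finrank (ZMod 2) (Dl E Q) = Module.finrank (ZMod 2) ↥Q :=
      Subspace.dual_finrank_eq
    have hd3 : Module.finrank (ZMod 2) (Dl E (P ⊓ Q)) = Module.finrank (ZMod 2) ↥(P ⊓ Q) :=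
      Subspace.dual_finrank_eq
    have hd4 : Module.finrank (ZMod 2) (Dl E (P ⊔ Q)) = Module.finrank (ZMod 2) ↥(P ⊔ Q) :=
      Subspace.dual_finrank_eq
    have hsup := Submodule.finrank_sup_add_finrank_inf_eq P Q
    omega
  have hrange : LinearMap.range Θ = LinearMap.ker μ :=
    Submodule.eq_of_le_of_finrank_eq hle hdim
  by_cases hc : res E (inf_le_left : P ⊓ Q ≤ P) φ = res E (inf_le_right : P ⊓ Q ≤ Q) ψ
  · rw [if_pos hc]
    have hmem : (φ, ψ) ∈ LinearMap.ker μ := by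
      rw [LinearMap.mem_ker, hμ_apply]
      exact sub_eq_zero_of_eq hc
    rw [← hrange] at hmem
    obtain ⟨η₀, hη₀⟩ := hmem
    have he : Nat.card {η : Dl E V // res E hP η = φ ∧ res E hQ η = ψ}
        = Nat.card ↥(LinearMap.ker Θ) := by
      rw [← card_fiber Θ (φ, ψ) η₀ hη₀]
      apply Nat.card_congr (Equiv.subtypeEquivRight _)
      intro η
      rw [hΘ_apply, Prod.ext_iff]
    rw [he, hker]
    have hm := card_ker_mul ρ hρs
    rw [dl_card, dl_card] at hm
    exact hm
  · rw [if_neg hc]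
    have : IsEmpty {η : Dl E V // res E hP η = φ ∧ res E hQ η = ψ} := by
      constructor
      rintro ⟨η, h1, h2⟩
      apply hc
      rw [← h1, ← h2, res_res, res_res]
    rw [Nat.card_of_isEmpty, zero_mul]

end AssocInfra

section AssocHelpers

lemma zmod2_iff3 (a b c : ZMod 2) : a + b + c = 0 ↔ c = a + b := by revert a b c; decide

lemma zmod2_iff4 (a b c d : ZMod 2) : a + b = c + d ↔ a + b + c + d = 0 := by revert a b c d; decide

lemma zmod2_iff4' (a b c d : ZMod 2) : c + d = a + b ↔ a + b + c + d = 0 := by revert a b c d; decide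

lemma dl_cond_iff {P : Submodule (ZMod 2) E} (a b c : Dl E P) :
    a + b + c = 0 ↔ c = a + b := by
  rw [DFunLike.ext_iff, DFunLike.ext_iff]
  simp only [LinearMap.add_apply, LinearMap.zero_apply]
  exact forall_congr' fun v => zmod2_iff3 _ _ _

lemma sum_indicator {α : Type} [Fintype α] (p : α → Prop) [DecidablePred p] (c : ℂ) :
    (∑ a : α, if p a then c else 0) = (Nat.card {a // p a} : ℂ) * c := by
  have h : (Finset.filter p Finset.univ).card = Nat.card {a // p a} := by
    rw [Nat.card_eq_fintype_card, Fintype.card_subtype]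
  rw [← Finset.sum_filter, Finset.sum_const, nsmul_eq_mul, h]

lemma ite_sum_zero {α : Type} [Fintype α] {c : Prop} [Decidable c] (f : α → ℂ) :
    (if c then ∑ a : α, f a else 0) = ∑ a : α, if c then f a else 0 := by
  split_ifs with h
  · rfl
  · simp

/-- Expansion of `conv` as a `Finset` sum. -/
lemma conv_apply (A B C : Submodule (ZMod 2) E)
    (f₁ : (X × X) × Dl E (A ⊓ B) → ℂ) (f₂ : (X × X) × Dl E (B ⊓ C) → ℂ)
    (x z : X) (η : Dl E (A ⊓ C)) :
    conv E X A B C f₁ f₂ ((x, z), η)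
      = (∑ y : X, ∑ ε₁ : Dl E (A ⊓ B), ∑ ε₂ : Dl E (B ⊓ C),
          if y ∈ XA E X B ∧ res E (leAB E A B C) ε₁ + res E (leBC E A B C) ε₂
              + res E (leAC E A B C) η = 0
          then f₁ ((x, y), ε₁) * f₂ ((y, z), ε₂) else 0)
        * ((Nat.card ↥(A ⊓ B ⊓ C) : ℂ) / (Nat.card ↥(A ⊓ C) : ℂ)) := by
  unfold conv
  rw [mul_div_assoc]
  congr 1
  rw [finsum_eq_sum_of_fintype]
  apply Finset.sum_congr rfl
  intro y _
  rw [finsum_eq_if]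
  by_cases hy : y ∈ XA E X B
  · rw [if_pos hy, finsum_eq_sum_of_fintype]
    apply Finset.sum_congr rfl; intro ε₁ _
    rw [finsum_eq_sum_of_fintype]
    apply Finset.sum_congr rfl; intro ε₂ _
    rw [finsum_eq_if]
    simp [hy]
  · rw [if_neg hy]
    simp [hy]

lemma card_ne_zero' (P : Submodule (ZMod 2) E) : (Nat.card ↥P : ℂ) ≠ 0 := by
  simp only [ne_eq, Nat.cast_eq_zero]
  exact Nat.card_ne_zero.mpr ⟨⟨0, P.zero_mem⟩, inferInstance⟩

end AssocHelpers

section MoreHelpers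

lemma zmod2_iff3' (a b c : ZMod 2) : a + b + c = 0 ↔ a = b + c := by revert a b c; decide

lemma zmod2_iff3m (a b c : ZMod 2) : a + b + c = 0 ↔ b = a + c := by revert a b c; decide

lemma zmod2_iff4m (a b c d : ZMod 2) : b + c = a + d ↔ a + b + c + d = 0 := by
  revert a b c d; decide

lemma dl_cond_iff' {P : Submodule (ZMod 2) E} (a b c : Dl E P) :
    a + b + c = 0 ↔ a = b + c := by
  rw [DFunLike.ext_iff, DFunLike.ext_iff]
  simp only [LinearMap.add_apply, LinearMap.zero_apply]
  exact forall_congr' fun v => zmod2_iff3' _ _ _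

lemma dl_cond_iffm {P : Submodule (ZMod 2) E} (a b c : Dl E P) :
    a + b + c = 0 ↔ b = a + c := by
  rw [DFunLike.ext_iff, DFunLike.ext_iff]
  simp only [LinearMap.add_apply, LinearMap.zero_apply]
  exact forall_congr' fun v => zmod2_iff3m _ _ _

lemma res_add {P Q : Submodule (ZMod 2) E} (h : P ≤ Q) (a b : Dl E Q) :
    res E h (a + b) = res E h a + res E h b := rfl

lemma scalar_assoc {a b c d e f t : ℂ} (h : b * f = c * d) (ha : a ≠ 0) (hb : b ≠ 0)
    (he : e ≠ 0) : (a / b * t) * (c / a) * (d / e) = t * (f / e) := by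
  field_simp
  linear_combination (-t) * h

end MoreHelpers

section Rot
lemma sum_rot3 {α β γ : Type} [Fintype α] [Fintype β] [Fintype γ]
    (g : α → β → γ → ℂ) :
    (∑ a, ∑ b, ∑ c, g a b c) = ∑ b, ∑ c, ∑ a, g a b c := by
  rw [Finset.sum_comm]
  refine Finset.sum_congr rfl fun b _ => ?_
  rw [Finset.sum_comm]

lemma sum_rot4 {α β γ δ : Type} [Fintype α] [Fintype β] [Fintype γ] [Fintype δ]
    (g : α → β → γ → δ → ℂ) :
    (∑ a, ∑ b, ∑ c, ∑ d, g a b c d) = ∑ b, ∑ c, ∑ d, ∑ a, g a b c d := by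
  rw [Finset.sum_comm]
  refine Finset.sum_congr rfl fun b _ => ?_
  rw [Finset.sum_comm]
  refine Finset.sum_congr rfl fun c _ => ?_
  rw [Finset.sum_comm]

lemma sum_rot5 {α β γ δ ι : Type} [Fintype α] [Fintype β] [Fintype γ] [Fintype δ] [Fintype ι]
    (g : α → β → γ → δ → ι → ℂ) :
    (∑ a, ∑ b, ∑ c, ∑ d, ∑ e, g a b c d e) = ∑ b, ∑ c, ∑ d, ∑ e, ∑ a, g a b c d e := by
  rw [Finset.sum_comm]
  refine Finset.sum_congr rfl fun b _ => ?_
  rw [Finset.sum_comm]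
  refine Finset.sum_congr rfl fun c _ => ?_
  rw [Finset.sum_comm]
  refine Finset.sum_congr rfl fun d _ => ?_
  rw [Finset.sum_comm]
end Rot

section Reorder

lemma sum_reorderL {α₁ α₂ α₃ α₄ α₅ α₆ : Type} [Fintype α₁] [Fintype α₂] [Fintype α₃]
    [Fintype α₄] [Fintype α₅] [Fintype α₆] (g : α₁ → α₂ → α₃ → α₄ → α₅ → α₆ → ℂ) :
    (∑ z : α₁, ∑ η : α₂, ∑ c : α₃, ∑ y : α₄, ∑ e₁ : α₅, ∑ e₂ : α₆, g z η c y e₁ e₂)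
      = ∑ y : α₄, ∑ e₁ : α₅, ∑ z : α₁, ∑ e₂ : α₆, ∑ c : α₃, ∑ η : α₂, g z η c y e₁ e₂ := by
  refine (Finset.sum_congr rfl fun z _ => sum_rot5 _).trans ?_
  refine (sum_rot5 _).trans ?_
  refine (sum_rot5 _).trans ?_
  refine Finset.sum_congr rfl fun y _ => Finset.sum_congr rfl fun e₁ _ => ?_
  refine (sum_rot3 _).trans ?_
  exact Finset.sum_congr rfl fun z _ => Finset.sum_comm

lemma sum_reorderR {α₁ α₂ α₃ α₄ α₅ α₆ : Type} [Fintype α₁] [Fintype α₂] [Fintype α₃]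
    [Fintype α₄] [Fintype α₅] [Fintype α₆] (g : α₁ → α₂ → α₃ → α₄ → α₅ → α₆ → ℂ) :
    (∑ y : α₁, ∑ e₁ : α₂, ∑ η : α₃, ∑ z : α₄, ∑ e₂ : α₅, ∑ e₃ : α₆, g y e₁ η z e₂ e₃)
      = ∑ y : α₁, ∑ e₁ : α₂, ∑ z : α₄, ∑ e₂ : α₅, ∑ e₃ : α₆, ∑ η : α₃, g y e₁ η z e₂ e₃ :=
  Finset.sum_congr rfl fun y _ => Finset.sum_congr rfl fun e₁ _ => sum_rot4 _

end Reorder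

set_option maxHeartbeats 2000000 in
/-- associativity of the product `⋆` on `𝓕`. -/
theorem statement0 (A B C D : Submodule (ZMod 2) E)
    (f₁ : (X × X) × Dl E (A ⊓ B) → ℂ) (f₂ : (X × X) × Dl E (B ⊓ C) → ℂ)
    (f₃ : (X × X) × Dl E (C ⊓ D) → ℂ)
    (h₁ : MemF E X A B f₁) (h₂ : MemF E X B C f₂) (h₃ : MemF E X C D f₃) :
    conv E X A C D (conv E X A B C f₁ f₂) f₃
      = conv E X A B D f₁ (conv E X B C D f₂ f₃) := by
  funext p
  obtain ⟨⟨x, w⟩, ε⟩ := p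
  have hWAB : A ⊓ B ⊓ C ⊓ D ≤ A ⊓ B := by
    intro v hv; simp only [Submodule.mem_inf] at hv ⊢; tauto
  have hWBC : A ⊓ B ⊓ C ⊓ D ≤ B ⊓ C := by
    intro v hv; simp only [Submodule.mem_inf] at hv ⊢; tauto
  have hWCD : A ⊓ B ⊓ C ⊓ D ≤ C ⊓ D := by
    intro v hv; simp only [Submodule.mem_inf] at hv ⊢; tauto
  have hWAD : A ⊓ B ⊓ C ⊓ D ≤ A ⊓ D := by
    intro v hv; simp only [Submodule.mem_inf] at hv ⊢; tauto
  have hL : conv E X A C D (conv E X A B C f₁ f₂) f₃ ((x, w), ε)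
      = (∑ y : X, ∑ ε₁ : Dl E (A ⊓ B), ∑ z : X, ∑ ε₂ : Dl E (B ⊓ C), ∑ ε₃ : Dl E (C ⊓ D),
          if (y ∈ XA E X B ∧ z ∈ XA E X C) ∧
              res E hWAB ε₁ + res E hWBC ε₂ + res E hWCD ε₃ + res E hWAD ε = 0
          then f₁ ((x, y), ε₁) * f₂ ((y, z), ε₂) * f₃ ((z, w), ε₃) else 0)
        * ((Nat.card ↥(A ⊓ B ⊓ C ⊓ D) : ℂ) / (Nat.card ↥(A ⊓ D) : ℂ)) := by
    simp only [conv_apply]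
    have hbody : ∀ (z : X) (η : Dl E (A ⊓ C)) (ε₃ : Dl E (C ⊓ D)),
        (if z ∈ XA E X C ∧ res E (leAB E A C D) η + res E (leBC E A C D) ε₃
            + res E (leAC E A C D) ε = 0 then
          (∑ y : X, ∑ ε₁ : Dl E (A ⊓ B), ∑ ε₂ : Dl E (B ⊓ C),
            if y ∈ XA E X B ∧ res E (leAB E A B C) ε₁ + res E (leBC E A B C) ε₂
                + res E (leAC E A B C) η = 0 then
              f₁ ((x, y), ε₁) * f₂ ((y, z), ε₂) else 0) *
            ((Nat.card ↥(A ⊓ B ⊓ C) : ℂ) / (Nat.card ↥(A ⊓ C) : ℂ)) * f₃ ((z, w), ε₃)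
        else 0)
        = (∑ y : X, ∑ ε₁ : Dl E (A ⊓ B), ∑ ε₂ : Dl E (B ⊓ C),
            if (y ∈ XA E X B ∧ res E (leAB E A B C) ε₁ + res E (leBC E A B C) ε₂
                + res E (leAC E A B C) η = 0)
               ∧ (z ∈ XA E X C ∧ res E (leAB E A C D) η + res E (leBC E A C D) ε₃
                + res E (leAC E A C D) ε = 0) then
              f₁ ((x, y), ε₁) * f₂ ((y, z), ε₂) * f₃ ((z, w), ε₃) else 0) *
            ((Nat.card ↥(A ⊓ B ⊓ C) : ℂ) / (Nat.card ↥(A ⊓ C) : ℂ)) := by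
      intro z η ε₃
      by_cases hc : z ∈ XA E X C ∧ res E (leAB E A C D) η + res E (leBC E A C D) ε₃
          + res E (leAC E A C D) ε = 0
      · rw [if_pos hc, mul_right_comm]
        congr 1
        rw [Finset.sum_mul]; refine Finset.sum_congr rfl fun y _ => ?_
        rw [Finset.sum_mul]; refine Finset.sum_congr rfl fun ε₁ _ => ?_
        rw [Finset.sum_mul]; refine Finset.sum_congr rfl fun ε₂ _ => ?_
        simp only [hc.1, hc.2, and_self, and_true]
        split_ifs with h
        · rfl
        · exact zero_mul _
      · rw [if_neg hc]
        simp only [hc, and_false, if_false, Finset.sum_const_zero, zero_mul]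
    simp only [hbody]
    simp only [← Finset.sum_mul]
    have hinfL : A ⊓ B ⊓ C ⊓ (A ⊓ C ⊓ D) = A ⊓ B ⊓ C ⊓ D := by
      ext v; simp only [Submodule.mem_inf]; tauto
    have hcmpL : ∀ (ε₁ : Dl E (A ⊓ B)) (ε₂ : Dl E (B ⊓ C)) (ε₃ : Dl E (C ⊓ D)),
        (res E (inf_le_left : A ⊓ B ⊓ C ⊓ (A ⊓ C ⊓ D) ≤ A ⊓ B ⊓ C)
            (res E (leAB E A B C) ε₁ + res E (leBC E A B C) ε₂)
          = res E (inf_le_right : A ⊓ B ⊓ C ⊓ (A ⊓ C ⊓ D) ≤ A ⊓ C ⊓ D)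
            (res E (leBC E A C D) ε₃ + res E (leAC E A C D) ε))
        ↔ res E hWAB ε₁ + res E hWBC ε₂ + res E hWCD ε₃ + res E hWAD ε = 0 := by
      intro ε₁ ε₂ ε₃
      rw [DFunLike.ext_iff, DFunLike.ext_iff]
      constructor
      · intro h v
        have hv' : (v : E) ∈ A ⊓ B ⊓ C ⊓ (A ⊓ C ⊓ D) := by
          have hv := v.2; simp only [Submodule.mem_inf] at hv ⊢; tauto
        have h2 := h ⟨(v : E), hv'⟩
        simp only [res_add, LinearMap.add_apply, res_apply, LinearMap.zero_apply] at h2 ⊢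
        exact (zmod2_iff4 _ _ _ _).mp h2
      · intro h v
        have hv' : (v : E) ∈ A ⊓ B ⊓ C ⊓ D := by
          have hv := v.2; simp only [Submodule.mem_inf] at hv ⊢; tauto
        have h2 := h ⟨(v : E), hv'⟩
        simp only [res_add, LinearMap.add_apply, res_apply, LinearMap.zero_apply] at h2 ⊢
        exact (zmod2_iff4 _ _ _ _).mpr h2
    have hcollapse : ∀ (y : X) (ε₁ : Dl E (A ⊓ B)) (z : X) (ε₂ : Dl E (B ⊓ C))
        (ε₃ : Dl E (C ⊓ D)),
        (∑ η : Dl E (A ⊓ C),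
          if (y ∈ XA E X B ∧ res E (leAB E A B C) ε₁ + res E (leBC E A B C) ε₂
              + res E (leAC E A B C) η = 0) ∧
             z ∈ XA E X C ∧ res E (leAB E A C D) η + res E (leBC E A C D) ε₃
              + res E (leAC E A C D) ε = 0 then
            f₁ ((x, y), ε₁) * f₂ ((y, z), ε₂) * f₃ ((z, w), ε₃) else 0)
        = ((Nat.card ↥(A ⊓ C) : ℂ) / (Nat.card ↥(A ⊓ B ⊓ C ⊔ A ⊓ C ⊓ D) : ℂ)) *
          (if (y ∈ XA E X B ∧ z ∈ XA E X C) ∧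
              res E hWAB ε₁ + res E hWBC ε₂ + res E hWCD ε₃ + res E hWAD ε = 0
            then f₁ ((x, y), ε₁) * f₂ ((y, z), ε₂) * f₃ ((z, w), ε₃) else 0) := by
      intro y ε₁ z ε₂ ε₃
      by_cases hyz : y ∈ XA E X B ∧ z ∈ XA E X C
      · have hcond : ∀ η : Dl E (A ⊓ C),
            ((y ∈ XA E X B ∧ res E (leAB E A B C) ε₁ + res E (leBC E A B C) ε₂
                + res E (leAC E A B C) η = 0) ∧
              z ∈ XA E X C ∧ res E (leAB E A C D) η + res E (leBC E A C D) ε₃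
                + res E (leAC E A C D) ε = 0)
            = (res E (leAC E A B C) η
                = res E (leAB E A B C) ε₁ + res E (leBC E A B C) ε₂ ∧
               res E (leAB E A C D) η
                = res E (leBC E A C D) ε₃ + res E (leAC E A C D) ε) := by
          intro η
          apply propext
          rw [dl_cond_iff E, dl_cond_iff' E]
          constructor
          · rintro ⟨⟨_, hh2⟩, _, hh1⟩; exact ⟨hh2, hh1⟩
          · rintro ⟨hh2, hh1⟩; exact ⟨⟨hyz.1, hh2⟩, hyz.2, hh1⟩
        simp only [hcond]
        rw [sum_indicator]
        have hcnt := count (E := E) (leAC E A B C) (leAB E A C D)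
          (res E (leAB E A B C) ε₁ + res E (leBC E A B C) ε₂)
          (res E (leBC E A C D) ε₃ + res E (leAC E A C D) ε)
        by_cases hW : res E hWAB ε₁ + res E hWBC ε₂ + res E hWCD ε₃ + res E hWAD ε = 0
        · rw [if_pos ⟨hyz, hW⟩]
          rw [if_pos ((hcmpL ε₁ ε₂ ε₃).mpr hW)] at hcnt
          have hNc : (Nat.card {η : Dl E (A ⊓ C) // res E (leAC E A B C) η
              = res E (leAB E A B C) ε₁ + res E (leBC E A B C) ε₂ ∧
              res E (leAB E A C D) η
              = res E (leBC E A C D) ε₃ + res E (leAC E A C D) ε} : ℂ)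
              = (Nat.card ↥(A ⊓ C) : ℂ) / (Nat.card ↥(A ⊓ B ⊓ C ⊔ A ⊓ C ⊓ D) : ℂ) := by
            rw [eq_div_iff (card_ne_zero' E _)]
            exact_mod_cast hcnt
          rw [hNc]
        · rw [if_neg (fun hcon => hW hcon.2), mul_zero]
          rw [if_neg (fun hc => hW ((hcmpL ε₁ ε₂ ε₃).mp hc))] at hcnt
          have hN : Nat.card {η : Dl E (A ⊓ C) // res E (leAC E A B C) η
              = res E (leAB E A B C) ε₁ + res E (leBC E A B C) ε₂ ∧
              res E (leAB E A C D) η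
              = res E (leBC E A C D) ε₃ + res E (leAC E A C D) ε} = 0 := by
            rcases Nat.mul_eq_zero.mp hcnt with h | h
            · exact h
            · exact absurd h (Nat.card_ne_zero.mpr
                ⟨⟨0, Submodule.zero_mem _⟩, inferInstance⟩)
          rw [hN]; simp
      · rw [if_neg (fun hcon => hyz hcon.1), mul_zero]
        apply Finset.sum_eq_zero
        intro η _
        exact if_neg (fun hcon => hyz ⟨hcon.1.1, hcon.2.1⟩)
    rw [sum_reorderL]
    simp only [hcollapse]
    simp only [← Finset.mul_sum]
    have hprod : (Nat.card ↥(A ⊓ B ⊓ C ⊔ A ⊓ C ⊓ D) : ℂ) * (Nat.card ↥(A ⊓ B ⊓ C ⊓ D) : ℂ)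
        = (Nat.card ↥(A ⊓ B ⊓ C) : ℂ) * (Nat.card ↥(A ⊓ C ⊓ D) : ℂ) := by
      have h := card_sup_mul_card_inf E (A ⊓ B ⊓ C) (A ⊓ C ⊓ D)
      rw [hinfL] at h
      exact_mod_cast h
    have n1 : (Nat.card ↥(A ⊓ C) : ℂ) ≠ 0 := card_ne_zero' E _
    have n2 : (Nat.card ↥(A ⊓ B ⊓ C ⊔ A ⊓ C ⊓ D) : ℂ) ≠ 0 := card_ne_zero' E _
    have n3 : (Nat.card ↥(A ⊓ D) : ℂ) ≠ 0 := card_ne_zero' E _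
    exact scalar_assoc hprod n1 n2 n3
  have hR : conv E X A B D f₁ (conv E X B C D f₂ f₃) ((x, w), ε)
      = (∑ y : X, ∑ ε₁ : Dl E (A ⊓ B), ∑ z : X, ∑ ε₂ : Dl E (B ⊓ C), ∑ ε₃ : Dl E (C ⊓ D),
          if (y ∈ XA E X B ∧ z ∈ XA E X C) ∧
              res E hWAB ε₁ + res E hWBC ε₂ + res E hWCD ε₃ + res E hWAD ε = 0
          then f₁ ((x, y), ε₁) * f₂ ((y, z), ε₂) * f₃ ((z, w), ε₃) else 0)
        * ((Nat.card ↥(A ⊓ B ⊓ C ⊓ D) : ℂ) / (Nat.card ↥(A ⊓ D) : ℂ)) := by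
    simp only [conv_apply]
    have hbodyR : ∀ (y : X) (ε₁ : Dl E (A ⊓ B)) (η : Dl E (B ⊓ D)),
        (if y ∈ XA E X B ∧ res E (leAB E A B D) ε₁ + res E (leBC E A B D) η
            + res E (leAC E A B D) ε = 0 then
          f₁ ((x, y), ε₁) *
            ((∑ z : X, ∑ ε₂ : Dl E (B ⊓ C), ∑ ε₃ : Dl E (C ⊓ D),
              if z ∈ XA E X C ∧ res E (leAB E B C D) ε₂ + res E (leBC E B C D) ε₃
                  + res E (leAC E B C D) η = 0 then
                f₂ ((y, z), ε₂) * f₃ ((z, w), ε₃) else 0) *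
              ((Nat.card ↥(B ⊓ C ⊓ D) : ℂ) / (Nat.card ↥(B ⊓ D) : ℂ)))
        else 0)
        = (∑ z : X, ∑ ε₂ : Dl E (B ⊓ C), ∑ ε₃ : Dl E (C ⊓ D),
            if (y ∈ XA E X B ∧ res E (leAB E A B D) ε₁ + res E (leBC E A B D) η
                + res E (leAC E A B D) ε = 0)
               ∧ z ∈ XA E X C ∧ res E (leAB E B C D) ε₂ + res E (leBC E B C D) ε₃
                + res E (leAC E B C D) η = 0 then
              f₁ ((x, y), ε₁) * f₂ ((y, z), ε₂) * f₃ ((z, w), ε₃) else 0) *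
            ((Nat.card ↥(B ⊓ C ⊓ D) : ℂ) / (Nat.card ↥(B ⊓ D) : ℂ)) := by
      intro y ε₁ η
      by_cases hc : y ∈ XA E X B ∧ res E (leAB E A B D) ε₁ + res E (leBC E A B D) η
          + res E (leAC E A B D) ε = 0
      · rw [if_pos hc, ← mul_assoc]
        congr 1
        rw [Finset.mul_sum]; refine Finset.sum_congr rfl fun z _ => ?_
        rw [Finset.mul_sum]; refine Finset.sum_congr rfl fun ε₂ _ => ?_
        rw [Finset.mul_sum]; refine Finset.sum_congr rfl fun ε₃ _ => ?_
        simp only [hc.1, hc.2, and_self, true_and]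
        split_ifs with h
        · exact (mul_assoc _ _ _).symm
        · exact mul_zero _
      · rw [if_neg hc]
        simp only [hc, false_and, if_false, Finset.sum_const_zero, zero_mul]
    simp only [hbodyR]
    simp only [← Finset.sum_mul]
    rw [sum_reorderR]
    have hinfR : B ⊓ C ⊓ D ⊓ (A ⊓ B ⊓ D) = A ⊓ B ⊓ C ⊓ D := by
      ext v; simp only [Submodule.mem_inf]; tauto
    have hcmpR : ∀ (ε₁ : Dl E (A ⊓ B)) (ε₂ : Dl E (B ⊓ C)) (ε₃ : Dl E (C ⊓ D)),
        (res E (inf_le_left : B ⊓ C ⊓ D ⊓ (A ⊓ B ⊓ D) ≤ B ⊓ C ⊓ D)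
            (res E (leAB E B C D) ε₂ + res E (leBC E B C D) ε₃)
          = res E (inf_le_right : B ⊓ C ⊓ D ⊓ (A ⊓ B ⊓ D) ≤ A ⊓ B ⊓ D)
            (res E (leAB E A B D) ε₁ + res E (leAC E A B D) ε))
        ↔ res E hWAB ε₁ + res E hWBC ε₂ + res E hWCD ε₃ + res E hWAD ε = 0 := by
      intro ε₁ ε₂ ε₃
      rw [DFunLike.ext_iff, DFunLike.ext_iff]
      constructor
      · intro h v
        have hv' : (v : E) ∈ B ⊓ C ⊓ D ⊓ (A ⊓ B ⊓ D) := by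
          have hv := v.2; simp only [Submodule.mem_inf] at hv ⊢; tauto
        have h2 := h ⟨(v : E), hv'⟩
        simp only [res_add, LinearMap.add_apply, res_apply, LinearMap.zero_apply] at h2 ⊢
        exact (zmod2_iff4m _ _ _ _).mp h2
      · intro h v
        have hv' : (v : E) ∈ A ⊓ B ⊓ C ⊓ D := by
          have hv := v.2; simp only [Submodule.mem_inf] at hv ⊢; tauto
        have h2 := h ⟨(v : E), hv'⟩
        simp only [res_add, LinearMap.add_apply, res_apply, LinearMap.zero_apply] at h2 ⊢
        exact (zmod2_iff4m _ _ _ _).mpr h2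
    have hcollapseR : ∀ (y : X) (ε₁ : Dl E (A ⊓ B)) (z : X) (ε₂ : Dl E (B ⊓ C))
        (ε₃ : Dl E (C ⊓ D)),
        (∑ η : Dl E (B ⊓ D),
          if (y ∈ XA E X B ∧ res E (leAB E A B D) ε₁ + res E (leBC E A B D) η
              + res E (leAC E A B D) ε = 0) ∧
             z ∈ XA E X C ∧ res E (leAB E B C D) ε₂ + res E (leBC E B C D) ε₃
              + res E (leAC E B C D) η = 0 then
            f₁ ((x, y), ε₁) * f₂ ((y, z), ε₂) * f₃ ((z, w), ε₃) else 0)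
        = ((Nat.card ↥(B ⊓ D) : ℂ) / (Nat.card ↥(B ⊓ C ⊓ D ⊔ A ⊓ B ⊓ D) : ℂ)) *
          (if (y ∈ XA E X B ∧ z ∈ XA E X C) ∧
              res E hWAB ε₁ + res E hWBC ε₂ + res E hWCD ε₃ + res E hWAD ε = 0
            then f₁ ((x, y), ε₁) * f₂ ((y, z), ε₂) * f₃ ((z, w), ε₃) else 0) := by
      intro y ε₁ z ε₂ ε₃
      by_cases hyz : y ∈ XA E X B ∧ z ∈ XA E X C
      · have hcond : ∀ η : Dl E (B ⊓ D),
            ((y ∈ XA E X B ∧ res E (leAB E A B D) ε₁ + res E (leBC E A B D) η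
                + res E (leAC E A B D) ε = 0) ∧
              z ∈ XA E X C ∧ res E (leAB E B C D) ε₂ + res E (leBC E B C D) ε₃
                + res E (leAC E B C D) η = 0)
            = (res E (leAC E B C D) η
                = res E (leAB E B C D) ε₂ + res E (leBC E B C D) ε₃ ∧
               res E (leBC E A B D) η
                = res E (leAB E A B D) ε₁ + res E (leAC E A B D) ε) := by
          intro η
          apply propext
          rw [dl_cond_iffm E, dl_cond_iff E]
          constructor
          · rintro ⟨⟨_, hh1⟩, _, hh2⟩; exact ⟨hh2, hh1⟩
          · rintro ⟨hh2, hh1⟩; exact ⟨⟨hyz.1, hh1⟩, hyz.2, hh2⟩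
        simp only [hcond]
        rw [sum_indicator]
        have hcnt := count (E := E) (leAC E B C D) (leBC E A B D)
          (res E (leAB E B C D) ε₂ + res E (leBC E B C D) ε₃)
          (res E (leAB E A B D) ε₁ + res E (leAC E A B D) ε)
        by_cases hW : res E hWAB ε₁ + res E hWBC ε₂ + res E hWCD ε₃ + res E hWAD ε = 0
        · rw [if_pos ⟨hyz, hW⟩]
          rw [if_pos ((hcmpR ε₁ ε₂ ε₃).mpr hW)] at hcnt
          have hNc : (Nat.card {η : Dl E (B ⊓ D) // res E (leAC E B C D) η
              = res E (leAB E B C D) ε₂ + res E (leBC E B C D) ε₃ ∧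
              res E (leBC E A B D) η
              = res E (leAB E A B D) ε₁ + res E (leAC E A B D) ε} : ℂ)
              = (Nat.card ↥(B ⊓ D) : ℂ) / (Nat.card ↥(B ⊓ C ⊓ D ⊔ A ⊓ B ⊓ D) : ℂ) := by
            rw [eq_div_iff (card_ne_zero' E _)]
            exact_mod_cast hcnt
          rw [hNc]
        · rw [if_neg (fun hcon => hW hcon.2), mul_zero]
          rw [if_neg (fun hc => hW ((hcmpR ε₁ ε₂ ε₃).mp hc))] at hcnt
          have hN : Nat.card {η : Dl E (B ⊓ D) // res E (leAC E B C D) η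
              = res E (leAB E B C D) ε₂ + res E (leBC E B C D) ε₃ ∧
              res E (leBC E A B D) η
              = res E (leAB E A B D) ε₁ + res E (leAC E A B D) ε} = 0 := by
            rcases Nat.mul_eq_zero.mp hcnt with h | h
            · exact h
            · exact absurd h (Nat.card_ne_zero.mpr
                ⟨⟨0, Submodule.zero_mem _⟩, inferInstance⟩)
          rw [hN]; simp
      · rw [if_neg (fun hcon => hyz hcon.1), mul_zero]
        apply Finset.sum_eq_zero
        intro η _
        exact if_neg (fun hcon => hyz ⟨hcon.1.1, hcon.2.1⟩)
    simp only [hcollapseR]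
    simp only [← Finset.mul_sum]
    have hprodR : (Nat.card ↥(B ⊓ C ⊓ D ⊔ A ⊓ B ⊓ D) : ℂ) * (Nat.card ↥(A ⊓ B ⊓ C ⊓ D) : ℂ)
        = (Nat.card ↥(B ⊓ C ⊓ D) : ℂ) * (Nat.card ↥(A ⊓ B ⊓ D) : ℂ) := by
      have h := card_sup_mul_card_inf E (B ⊓ C ⊓ D) (A ⊓ B ⊓ D)
      rw [hinfR] at h
      exact_mod_cast h
    have n1 : (Nat.card ↥(B ⊓ D) : ℂ) ≠ 0 := card_ne_zero' E _
    have n2 : (Nat.card ↥(B ⊓ C ⊓ D ⊔ A ⊓ B ⊓ D) : ℂ) ≠ 0 := card_ne_zero' E _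
    have n3 : (Nat.card ↥(A ⊓ D) : ℂ) ≠ 0 := card_ne_zero' E _
    exact scalar_assoc hprodR n1 n2 n3
  exact hL.trans hR.symm

end Lusztig
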